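/- arXiv:2009.05134 — 5 statements merged into one kernel-verified Lean document; each statement's English description precedes it below -/
import Mathlib

section
/- Suppose Δ² - ε·Δ + x = Σ_i w_i* w_i in ℝ[Γ] for some ε > 0, some x ∈ I[Γ], and elements w_i ∈ ℝ[Γ], and suppose M·Δ - x = Σ_j v_j* v_j with v_j ∈ I[Γ] for some M with 0 < M < ε. Then Δ² - (ε - M)·Δ is a sum of hermitian squares in ℝ[Γ], with ε - M > 0. -/
/-- The involution on the real group algebra extending `γ ↦ γ⁻¹`. -/
noncomputable def astar {Γ : Type*} [Group Γ] (x : MonoidAlgebra ℝ Γ) :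
    MonoidAlgebra ℝ Γ :=
  MonoidAlgebra.ofCoeff (Finsupp.mapDomain (fun g => g⁻¹) x.coeff)

/-- The augmentation map `Σ a_γ γ ↦ Σ a_γ`. -/
def aug {Γ : Type*} [Group Γ] (x : MonoidAlgebra ℝ Γ) : ℝ :=
  x.coeff.sum fun _ a => a

/-- The Laplacian `Δ = |S|·1 - Σ_{s∈S} s`. -/
noncomputable def Delta {Γ : Type*} [Group Γ] (S : Finset Γ) :
    MonoidAlgebra ℝ Γ :=
  (S.card : ℝ) • (1 : MonoidAlgebra ℝ Γ) - ∑ s ∈ S, MonoidAlgebra.single s (1 : ℝ)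


theorem stmt3 {Γ : Type*} [Group Γ] (S : Finset Γ)
    (ε M : ℝ) (hε : 0 < ε) (hM : 0 < M) (hMε : M < ε)
    (x : MonoidAlgebra ℝ Γ) (hx : aug x = 0)
    (n : ℕ) (w : Fin n → MonoidAlgebra ℝ Γ)
    (hw : (Delta S) ^ 2 - ε • Delta S + x = ∑ i, astar (w i) * w i)
    (m : ℕ) (v : Fin m → MonoidAlgebra ℝ Γ) (hv0 : ∀ j, aug (v j) = 0)
    (hv : M • Delta S - x = ∑ j, astar (v j) * v j) :
    0 < ε - M ∧
    ∃ (k : ℕ) (u : Fin k → MonoidAlgebra ℝ Γ),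
      (Delta S) ^ 2 - (ε - M) • Delta S = ∑ i, astar (u i) * u i := by
  refine ⟨by linarith, n + m, Fin.append w v, ?_⟩
  have key : (Delta S) ^ 2 - (ε - M) • Delta S
      = ((Delta S) ^ 2 - ε • Delta S + x) + (M • Delta S - x) := by
    rw [sub_smul]; abel
  rw [key, hw, hv, Fin.sum_univ_add]
  simp [Fin.append]
end

section
/- Let Γ be a group generated by a finite symmetric set S, let H be a Hilbert space, and let α : Γ → H satisfy: (i) |α(γγ₁) - α(γγ₂)| = |α(γ₁) - α(γ₂)| for all γ, γ₁, γ₂ ∈ Γ, and (ii) Σ_{s∈S} α(γs) = |S|·α(γ) for all γ ∈ Γ. If t ∈ Γ satisfies t⁻¹St = S, then the difference α(γt) - α(γ) is independent of γ ∈ Γ. -/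
open scoped RealInnerProductSpace


theorem stmt7 {Γ : Type*} [Group Γ] {H : Type*}
    [NormedAddCommGroup H] [InnerProductSpace ℝ H] [CompleteSpace H]
    (S : Finset Γ) (hsym : ∀ s ∈ S, s⁻¹ ∈ S)
    (hgen : Subgroup.closure (S : Set Γ) = ⊤)
    (α : Γ → H)
    (hinv : ∀ γ γ₁ γ₂ : Γ, ‖α (γ * γ₁) - α (γ * γ₂)‖ = ‖α γ₁ - α γ₂‖)
    (hflat : ∀ γ : Γ, ∑ s ∈ S, α (γ * s) = (S.card : ℝ) • α γ)
    (t : Γ) (ht : ∀ s ∈ S, t⁻¹ * s * t ∈ S) :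
    ∀ γ₁ γ₂ : Γ, α (γ₁ * t) - α γ₁ = α (γ₂ * t) - α γ₂ := by
  classical
  set f : Γ → H := fun γ => α (γ * t) - α γ with hf
  set c : ℝ := ‖α t - α 1‖ with hcdef
  have hc : ∀ γ, ‖f γ‖ = c := by
    intro γ
    have := hinv γ t 1
    simpa [hf, mul_one] using this
  have hφinj : Function.Injective (fun s : Γ => t⁻¹ * s * t) := by
    intro a b h
    simp only at h
    exact mul_left_cancel (mul_right_cancel h)
  have himg : S.image (fun s => t⁻¹ * s * t) = S := by
    apply Finset.eq_of_subset_of_card_le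
    · intro x hx
      simp only [Finset.mem_image] at hx
      obtain ⟨s, hs, rfl⟩ := hx
      exact ht s hs
    · rw [Finset.card_image_of_injective _ hφinj]
  have hconj : ∀ g : Γ → H, ∑ s ∈ S, g (t⁻¹ * s * t) = ∑ s ∈ S, g s := by
    intro g
    conv_rhs => rw [← himg]
    rw [Finset.sum_image (fun a _ b _ h => hφinj h)]
  have hsum : ∀ γ, ∑ s ∈ S, f (γ * s) = (S.card : ℝ) • f γ := by
    intro γ
    have harr : ∀ s : Γ, γ * s * t = (γ * t) * (t⁻¹ * s * t) := by intro s; group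
    have h1 : ∑ s ∈ S, α (γ * s * t) = (S.card : ℝ) • α (γ * t) := by
      calc ∑ s ∈ S, α (γ * s * t) = ∑ s ∈ S, α ((γ * t) * (t⁻¹ * s * t)) := by
            simp_rw [harr]
        _ = ∑ s ∈ S, α ((γ * t) * s) := hconj (fun s => α ((γ * t) * s))
        _ = _ := hflat (γ * t)
    simp only [hf]
    rw [Finset.sum_sub_distrib, h1, hflat γ, ← smul_sub]
  have key : ∀ γ : Γ, ∀ s ∈ S, f (γ * s) = f γ := by
    intro γ s hs
    have hterm : ∀ s' ∈ S, (inner ℝ (f γ) (f (γ * s')) : ℝ) ≤ c ^ 2 := by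
      intro s' _
      calc (inner ℝ (f γ) (f (γ * s')) : ℝ) ≤ ‖f γ‖ * ‖f (γ * s')‖ := real_inner_le_norm _ _
        _ = c ^ 2 := by rw [hc, hc]; ring
    have hsumeq : ∑ s' ∈ S, (inner ℝ (f γ) (f (γ * s')) : ℝ) = ∑ s' ∈ S, c ^ 2 := by
      rw [← inner_sum, hsum γ, real_inner_smul_right, real_inner_self_eq_norm_sq, hc,
        Finset.sum_const, nsmul_eq_mul]
      try ring
    have heach : (inner ℝ (f γ) (f (γ * s)) : ℝ) = c ^ 2 :=
      (Finset.sum_eq_sum_iff_of_le hterm).mp hsumeq s hs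
    have hnorm0 : ‖f γ - f (γ * s)‖ ^ 2 = 0 := by
      rw [norm_sub_sq_real, heach, hc, hc]
      ring
    have : f γ - f (γ * s) = 0 := by
      have := pow_eq_zero_iff (n := 2) (by norm_num) |>.mp hnorm0
      exact norm_eq_zero.mp this
    exact (sub_eq_zero.mp this).symm
  have Q : ∀ γ : Γ, ∀ δ : Γ, f (δ * γ) = f δ := by
    intro γ
    have hγ : γ ∈ Subgroup.closure (S : Set Γ) := hgen ▸ Subgroup.mem_top γ
    induction hγ using Subgroup.closure_induction with
    | mem s hs => intro δ; exact key δ s hs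
    | one => intro δ; simp
    | mul a b _ _ ha hb =>
        intro δ
        rw [← mul_assoc, hb, ha]
    | inv a _ ha =>
        intro δ
        have := ha (δ * a⁻¹)
        simpa using this.symm
  intro γ₁ γ₂
  have h1 := Q γ₁ 1
  have h2 := Q γ₂ 1
  simp only [one_mul] at h1 h2
  show f γ₁ = f γ₂
  rw [h1, h2]
end

section
/- Let Γ be a group generated by a finite symmetric set S, H a Hilbert space, and α : Γ → H an S-flat Γ-invariant arrangement (i.e. |α(γγ₁) - α(γγ₂)| = |α(γ₁) - α(γ₂)| for all γ, γ₁, γ₂, and Σ_{s∈S} α(γs) = |S|·α(γ) for all γ). If t ∈ Γ has finite order and t⁻¹St = S, then α(γt) = α(γ) for all γ ∈ Γ. -/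
open RealInnerProductSpace

theorem stmt8 {Γ : Type*} [Group Γ] {H : Type*}
    [NormedAddCommGroup H] [InnerProductSpace ℝ H] [CompleteSpace H]
    (S : Finset Γ) (hsym : ∀ s ∈ S, s⁻¹ ∈ S)
    (hgen : Subgroup.closure (S : Set Γ) = ⊤)
    (α : Γ → H)
    (hinv : ∀ γ γ₁ γ₂ : Γ, ‖α (γ * γ₁) - α (γ * γ₂)‖ = ‖α γ₁ - α γ₂‖)
    (hflat : ∀ γ : Γ, ∑ s ∈ S, α (γ * s) = (S.card : ℝ) • α γ)
    (t : Γ) (htfin : IsOfFinOrder t) (ht : ∀ s ∈ S, t⁻¹ * s * t ∈ S) :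
    ∀ γ : Γ, α (γ * t) = α γ := by
  classical
  set f : Γ → H := fun γ => α (γ * t) - α γ with hf
  have hnorm : ∀ γ, ‖f γ‖ = ‖f 1‖ := by
    intro γ
    have h := hinv γ t 1
    simpa [hf] using h
  have hconjinj : Function.Injective (fun s : Γ => t⁻¹ * s * t) := by
    intro a b h
    simp only at h
    exact mul_left_cancel (mul_right_cancel h)
  have himg : S.image (fun s => t⁻¹ * s * t) = S := by
    apply Finset.eq_of_subset_of_card_le
    · intro x hx
      obtain ⟨s, hs, rfl⟩ := Finset.mem_image.mp hx
      exact ht s hs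
    · rw [Finset.card_image_of_injective _ hconjinj]
  have hfsum : ∀ γ, ∑ s ∈ S, f (γ * s) = (S.card : ℝ) • f γ := by
    intro γ
    have h1 : ∑ s ∈ S, α (γ * s * t) = (S.card : ℝ) • α (γ * t) := by
      calc ∑ s ∈ S, α (γ * s * t)
          = ∑ s ∈ S, α (γ * t * (t⁻¹ * s * t)) := by
            refine Finset.sum_congr rfl fun s _ => ?_
            congr 1
            group
        _ = ∑ x ∈ S.image (fun s => t⁻¹ * s * t), α (γ * t * x) := by
            rw [Finset.sum_image (fun a _ b _ h => hconjinj h)]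
        _ = (S.card : ℝ) • α (γ * t) := by rw [himg]; exact hflat (γ * t)
    simp only [hf, Finset.sum_sub_distrib, h1, hflat γ, smul_sub]
  have hstep : ∀ γ, ∀ s ∈ S, f (γ * s) = f γ := by
    intro γ s hs
    have hinner : ∀ s ∈ S, (inner ℝ (f (γ * s)) (f γ) : ℝ) ≤ ‖f γ‖ ^ 2 := by
      intro s hs
      calc (inner ℝ (f (γ * s)) (f γ) : ℝ) ≤ ‖f (γ * s)‖ * ‖f γ‖ := real_inner_le_norm _ _
        _ = ‖f γ‖ ^ 2 := by rw [hnorm (γ * s), ← hnorm γ]; ring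
    have hsum : ∑ s ∈ S, (inner ℝ (f (γ * s)) (f γ) : ℝ) = ∑ _s ∈ S, ‖f γ‖ ^ 2 := by
      rw [← sum_inner, hfsum γ, real_inner_smul_left, real_inner_self_eq_norm_sq,
        Finset.sum_const, nsmul_eq_mul]
    have heq := (Finset.sum_eq_sum_iff_of_le hinner).mp hsum s hs
    have hz : ‖f (γ * s) - f γ‖ ^ 2 = 0 := by
      rw [norm_sub_sq_real, heq, hnorm (γ * s), ← hnorm γ]
      ring
    have := pow_eq_zero_iff (n := 2) (by norm_num) |>.mp hz
    rw [norm_eq_zero, sub_eq_zero] at this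
    exact this
  have hconst : ∀ δ γ : Γ, f (γ * δ) = f γ := by
    intro δ
    have hδ : δ ∈ Subgroup.closure (S : Set Γ) := by rw [hgen]; trivial
    induction hδ using Subgroup.closure_induction with
    | mem x hx => exact fun γ => hstep γ x hx
    | one => simp
    | mul x y hx hy ihx ihy =>
      intro γ
      rw [← mul_assoc, ihy (γ * x), ihx γ]
    | inv x hx ihx =>
      intro γ
      have := ihx (γ * x⁻¹)
      simpa using this.symm
  have hd : ∀ γ, f γ = f 1 := by
    intro γ
    simpa using hconst γ 1
  have hpow : ∀ n : ℕ, α (t ^ n) = α 1 + (n : ℝ) • f 1 := by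
    intro n
    induction n with
    | zero => simp
    | succ n ih =>
      have : α (t ^ (n + 1)) = α (t ^ n) + f (t ^ n) := by
        rw [hf]; simp [pow_succ]
      rw [this, hd (t ^ n), ih]
      push_cast
      rw [add_smul, one_smul]
      abel
  have hn0 : (0 : ℕ) < orderOf t := htfin.orderOf_pos
  have hone : α (t ^ orderOf t) = α 1 := by rw [pow_orderOf_eq_one]
  have hzero : f 1 = 0 := by
    have := hpow (orderOf t)
    rw [hone] at this
    have h2 : ((orderOf t : ℝ)) • f 1 = 0 := by
      have := this.symm
      rwa [add_eq_left] at this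
    have : (orderOf t : ℝ) ≠ 0 := by positivity
    exact (smul_eq_zero.mp h2).resolve_left this
  intro γ
  have : f γ = 0 := by rw [hd γ, hzero]
  have := this
  rw [hf] at this
  simpa [sub_eq_zero] using this
end

section
/- Let H₃ = ⟨e, f, g | [e,f] = 1, [f,g] = 1, [e,g] = f⟩ be the discrete Heisenberg group, H a real Hilbert space, and α : H₃ → H satisfy |α(γγ₁) - α(γγ₂)| = |α(γ₁) - α(γ₂)| for all γ, γ₁, γ₂ ∈ H₃. If there is a vector d ∈ H with α(γf) = α(γ) + d for all γ ∈ H₃ (f acts as a translation by d in the arrangement), then d = 0, i.e. α(γf) = α(γ) for all γ. -/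
/-- The discrete Heisenberg group, presented abstractly: a group generated by
`e, g` with `f = [e,g]` central. -/
theorem stmt9 {Γ : Type*} [Group Γ] {H : Type*}
    [NormedAddCommGroup H] [InnerProductSpace ℝ H] [CompleteSpace H]
    (e f g : Γ)
    (hef : e * f = f * e) (hfg : f * g = g * f)
    (heg : e⁻¹ * g⁻¹ * e * g = f)
    (hgen : Subgroup.closure ({e, f, g} : Set Γ) = ⊤)
    (α : Γ → H)
    (hinv : ∀ γ γ₁ γ₂ : Γ, ‖α (γ * γ₁) - α (γ * γ₂)‖ = ‖α γ₁ - α γ₂‖)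
    (d : H) (hd : ∀ γ : Γ, α (γ * f) = α γ + d) :
    d = 0 ∧ ∀ γ : Γ, α (γ * f) = α γ := by
  have cef : Commute e f := hef
  have cfg : Commute f g := hfg
  have heg' : e * g = g * e * f := by rw [← heg]; group
  -- e^m * g = g * e^m * f^m
  have h1 : ∀ m : ℕ, e ^ m * g = g * e ^ m * f ^ m := by
    intro m
    induction m with
    | zero => simp
    | succ m ih =>
      have cfme : Commute (f ^ m) e := (cef.symm.pow_left m)
      calc e ^ (m + 1) * g = e ^ m * (e * g) := by rw [pow_succ']; group
        _ = e ^ m * g * (e * f) := by rw [heg']; group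
        _ = g * e ^ m * f ^ m * (e * f) := by rw [ih]
        _ = g * e ^ m * (f ^ m * e) * f := by group
        _ = g * e ^ m * (e * f ^ m) * f := by rw [cfme.eq]
        _ = g * e ^ (m + 1) * f ^ (m + 1) := by rw [pow_succ, pow_succ']; group
  -- e^m * g^n = g^n * e^m * f^(m*n)
  have h2 : ∀ m n : ℕ, e ^ m * g ^ n = g ^ n * e ^ m * f ^ (m * n) := by
    intro m n
    induction n with
    | zero => simp
    | succ n ih =>
      have cfg' : Commute (f ^ (m * n)) g := (cfg.pow_left _)
      calc e ^ m * g ^ (n + 1) = (e ^ m * g ^ n) * g := by rw [pow_succ]; group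
        _ = g ^ n * e ^ m * f ^ (m * n) * g := by rw [ih]
        _ = g ^ n * e ^ m * (g * f ^ (m * n)) := by rw [← cfg'.eq]; group
        _ = g ^ n * (e ^ m * g) * f ^ (m * n) := by group
        _ = g ^ n * (g * e ^ m * f ^ m) * f ^ (m * n) := by rw [h1]
        _ = g ^ (n + 1) * e ^ m * f ^ (m * (n + 1)) := by
            rw [pow_succ', mul_add, pow_add, mul_one]; group
  -- key commutator identity
  have key : ∀ n : ℕ, f ^ (n * n) = e⁻¹ ^ n * (g⁻¹ ^ n * (e ^ n * g ^ n)) := by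
    intro n
    have := h2 n n
    rw [this, inv_pow, inv_pow]
    group
  -- α(γ * f^k) = α γ + k • d
  have hfd : ∀ (γ : Γ) (k : ℕ), α (γ * f ^ k) = α γ + k • d := by
    intro γ k
    induction k with
    | zero => simp
    | succ k ih =>
      rw [pow_succ, ← mul_assoc, hd, ih, succ_nsmul, add_assoc]
  -- power bound
  have hpow : ∀ (x : Γ) (n : ℕ), ‖α (x ^ n) - α 1‖ ≤ n * ‖α x - α 1‖ := by
    intro x n
    induction n with
    | zero => simp
    | succ n ih =>
      have h3 : ‖α (x ^ (n + 1)) - α (x ^ n)‖ = ‖α x - α 1‖ := by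
        have := hinv (x ^ n) x 1
        rwa [mul_one, ← pow_succ] at this
      calc ‖α (x ^ (n + 1)) - α 1‖
          ≤ ‖α (x ^ (n + 1)) - α (x ^ n)‖ + ‖α (x ^ n) - α 1‖ := norm_sub_le_norm_sub_add_norm_sub _ _ _
        _ ≤ ‖α x - α 1‖ + n * ‖α x - α 1‖ := by rw [h3]; linarith
        _ = (n + 1 : ℕ) * ‖α x - α 1‖ := by push_cast; ring
  -- peeling lemma
  have hpeel : ∀ (y x : Γ), ‖α (y * x) - α 1‖ ≤ ‖α x - α 1‖ + ‖α y - α 1‖ := by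
    intro y x
    have h3 : ‖α (y * x) - α y‖ = ‖α x - α 1‖ := by
      have := hinv y x 1
      rwa [mul_one] at this
    calc ‖α (y * x) - α 1‖ ≤ ‖α (y * x) - α y‖ + ‖α y - α 1‖ :=
          norm_sub_le_norm_sub_add_norm_sub _ _ _
      _ = ‖α x - α 1‖ + ‖α y - α 1‖ := by rw [h3]
  set C : ℝ := ‖α e - α 1‖ + ‖α e⁻¹ - α 1‖ + ‖α g - α 1‖ + ‖α g⁻¹ - α 1‖ with hC
  have main : ∀ n : ℕ, (n * n : ℝ) * ‖d‖ ≤ n * C := by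
    intro n
    have hnorm : ‖α (f ^ (n * n)) - α 1‖ = (n * n : ℝ) * ‖d‖ := by
      have := hfd 1 (n * n)
      rw [one_mul] at this
      rw [this, add_sub_cancel_left, ← Nat.cast_smul_eq_nsmul ℝ, norm_smul]
      push_cast
      simp [abs_of_nonneg, mul_nonneg]
    rw [← hnorm, key n]
    have b1 := hpeel (e⁻¹ ^ n) (g⁻¹ ^ n * (e ^ n * g ^ n))
    have b2 := hpeel (g⁻¹ ^ n) (e ^ n * g ^ n)
    have b3 := hpeel (e ^ n) (g ^ n)
    have p1 := hpow e n
    have p2 := hpow e⁻¹ n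
    have p3 := hpow g n
    have p4 := hpow g⁻¹ n
    calc ‖α (e⁻¹ ^ n * (g⁻¹ ^ n * (e ^ n * g ^ n))) - α 1‖
        ≤ ‖α (g⁻¹ ^ n * (e ^ n * g ^ n)) - α 1‖ + ‖α (e⁻¹ ^ n) - α 1‖ := b1
      _ ≤ (‖α (e ^ n * g ^ n) - α 1‖ + ‖α (g⁻¹ ^ n) - α 1‖) + ‖α (e⁻¹ ^ n) - α 1‖ := by
          linarith
      _ ≤ ((‖α (g ^ n) - α 1‖ + ‖α (e ^ n) - α 1‖) + ‖α (g⁻¹ ^ n) - α 1‖) + ‖α (e⁻¹ ^ n) - α 1‖ := by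
          linarith
      _ ≤ n * C := by rw [hC]; push_cast; nlinarith [norm_nonneg (α (g ^ n) - α 1)]
  have hd0 : d = 0 := by
    by_contra h
    have hdn : 0 < ‖d‖ := norm_pos_iff.mpr h
    obtain ⟨n, hn⟩ := exists_nat_gt (max (C / ‖d‖) 0)
    have hn0 : (0 : ℝ) < n := lt_of_le_of_lt (le_max_right _ _) hn
    have hnC : C < n * ‖d‖ := by
      have : C / ‖d‖ < n := lt_of_le_of_lt (le_max_left _ _) hn
      calc C = (C / ‖d‖) * ‖d‖ := by field_simp
        _ < n * ‖d‖ := by exact mul_lt_mul_of_pos_right this hdn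
    have := main n
    nlinarith
  refine ⟨hd0, fun γ => ?_⟩
  rw [hd γ, hd0, add_zero]
end

section
/- Let S and S* be the bilateral shift and its adjoint on ℓ²(ℤ), and for θ ∈ [0,1] let M_θ be the multiplication operator (M_θ ξ)(n) = 2cos(2πθn)·ξ(n). Define Harper's operator H_θ = S + S* + M_θ. If the element T = (e + e⁻¹ + g + g⁻¹)(f + f⁻¹) - 8·1 - 2η₁(e + e⁻¹ + g + g⁻¹ - 4·1) - 4η₂(f + f⁻¹ - 2·1) is mapped under the representation π_θ of the Heisenberg group (e ↦ S, f ↦ exp(2πiθ)·1, g ↦ multiplication by exp(2πiθ·)) to a positive operator for all θ, then for all θ with η₁ > cos(2πθ): H_θ ≤ (4(η₁ + η₂ - 1) - 4η₂cos(2πθ))/(η₁ - cos(2πθ)) · 1 as operators on ℓ²(ℤ). -/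
open Real ContinuousLinearMap

/-- `ℓ²(ℤ)`. -/
noncomputable abbrev l2Z : Type := lp (fun _ : ℤ => ℂ) 2

/-- `T` is the image under `π_θ` of
`(e+e⁻¹+g+g⁻¹)(f+f⁻¹) - 8 - 2η₁(e+e⁻¹+g+g⁻¹-4) - 4η₂(f+f⁻¹-2)`,
where `π_θ(e)` is the bilateral shift `Sh`, `π_θ(f) = exp(2πiθ)·1`, and
`π_θ(g)+π_θ(g)⁻¹ = M` is the multiplication operator by `2cos(2πθ·)`. -/
noncomputable def HarperT (θ η₁ η₂ : ℝ) (Sh M : l2Z →L[ℂ] l2Z) :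
    l2Z →L[ℂ] l2Z :=
  ((2 * Real.cos (2 * π * θ) : ℝ) : ℂ) • (Sh + adjoint Sh + M) -
    (8 : ℂ) • (1 : l2Z →L[ℂ] l2Z) -
    ((2 * η₁ : ℝ) : ℂ) • (Sh + adjoint Sh + M - (4 : ℂ) • (1 : l2Z →L[ℂ] l2Z)) -
    ((4 * η₂ : ℝ) : ℂ) • (((2 * Real.cos (2 * π * θ) : ℝ) : ℂ) •
        (1 : l2Z →L[ℂ] l2Z) - (2 : ℂ) • (1 : l2Z →L[ℂ] l2Z))

/-- A nonnegative real scalar multiple of a positive operator is positive. -/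
lemma smul_isPositive' {E : Type*} [NormedAddCommGroup E] [InnerProductSpace ℂ E]
    [CompleteSpace E] {T : E →L[ℂ] E} (hT : T.IsPositive) {r : ℝ} (hr : 0 ≤ r) :
    (((r : ℂ)) • T).IsPositive := by
  exact hT.smul_of_nonneg (Complex.zero_le_real.mpr hr)

theorem stmt16 (η₁ η₂ : ℝ) (hη₁ : 1 ≤ η₁)
    (Sh M : ℝ → (l2Z →L[ℂ] l2Z))
    -- `Sh θ` is the bilateral shift
    (hSh : ∀ θ : ℝ, ∀ (ξ : l2Z) (n : ℤ), (Sh θ) ξ n = ξ (n - 1))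
    -- `M θ` is multiplication by `2cos(2πθn)`
    (hM : ∀ θ : ℝ, ∀ (ξ : l2Z) (n : ℤ),
      (M θ) ξ n = ((2 * Real.cos (2 * π * θ * n) : ℝ) : ℂ) * ξ n)
    -- `π_θ(T)` is a positive operator for all `θ ∈ [0,1]`
    (hpos : ∀ θ ∈ Set.Icc (0 : ℝ) 1, (HarperT θ η₁ η₂ (Sh θ) (M θ)).IsPositive) :
    -- then Harper's operator `H_θ = Sh + Sh* + M_θ` satisfies the norm bound
    ∀ θ ∈ Set.Icc (0 : ℝ) 1, η₁ > Real.cos (2 * π * θ) →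
      (((((4 * (η₁ + η₂ - 1) - 4 * η₂ * Real.cos (2 * π * θ)) /
            (η₁ - Real.cos (2 * π * θ)) : ℝ)) : ℂ) • (1 : l2Z →L[ℂ] l2Z) -
        (Sh θ + adjoint (Sh θ) + M θ)).IsPositive := by
  intro θ hθ hgt
  have hd : (0:ℝ) < η₁ - Real.cos (2 * π * θ) := sub_pos.mpr hgt
  have key : ((((4 * (η₁ + η₂ - 1) - 4 * η₂ * Real.cos (2 * π * θ)) /
          (η₁ - Real.cos (2 * π * θ)) : ℝ)) : ℂ) • (1 : l2Z →L[ℂ] l2Z) -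
        (Sh θ + adjoint (Sh θ) + M θ) =
      ((1 / (2 * (η₁ - Real.cos (2 * π * θ))) : ℝ) : ℂ) •
        HarperT θ η₁ η₂ (Sh θ) (M θ) := by
    have hd' : ((η₁ - Real.cos (2 * π * θ) : ℝ) : ℂ) ≠ 0 := by
      exact_mod_cast Complex.ofReal_ne_zero.mpr hd.ne'
    rw [HarperT]
    match_scalars <;> (push_cast at hd' ⊢; field_simp; ring)
  rw [key]
  exact smul_isPositive' (hpos θ hθ) (by positivity)
end
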